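/- arXiv:1810.03440 — 4 statements merged into one kernel-verified Lean document; each statement's English description precedes it below -/
import Mathlib

section
/- Complete detectability of the pair [A(h), H]: let h > 0, let Λ ∈ ℝ^{d×d} be invertible, and let H = Ċ − ΛC = [−Λ, I_d, 0, …, 0] ∈ ℝ^{d×(q+1)d}. If a vector w ∈ ℝ^{(q+1)d} satisfies A(h)w = ηw for some scalar η and Hw = 0, then w = 0. -/
open Matrix
open scoped Kronecker

/-- Entries of the one-dimensional discretised IWP(q) transition matrix `A⁽¹⁾(h)`. -/
noncomputable def Aone (q : ℕ) (h : ℝ) : Matrix (Fin (q + 1)) (Fin (q + 1)) ℝ :=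
  Matrix.of fun i j =>
    if i ≤ j then h ^ (j.val - i.val) / Nat.factorial (j.val - i.val) else 0

/-- The discretised IWP(q) transition matrix `A(h) = A⁽¹⁾(h) ⊗ I_d`. -/
noncomputable def Amat (q d : ℕ) (h : ℝ) :
    Matrix (Fin (q + 1) × Fin d) (Fin (q + 1) × Fin d) ℝ :=
  Aone q h ⊗ₖ (1 : Matrix (Fin d) (Fin d) ℝ)

/-- `C = [I_d, 0, …, 0]`, extracting the first `d`-dimensional sub-vector. -/
def Cmat (q d : ℕ) : Matrix (Fin d) (Fin (q + 1) × Fin d) ℝ :=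
  Matrix.of fun k p => if p.1 = 0 ∧ p.2 = k then 1 else 0

/-- `Ċ = [0, I_d, 0, …, 0]`, extracting the second `d`-dimensional sub-vector. -/
def Cdot (q d : ℕ) : Matrix (Fin d) (Fin (q + 1) × Fin d) ℝ :=
  Matrix.of fun k p => if p.1.val = 1 ∧ p.2 = k then 1 else 0

/-- complete detectability of `[A(h), H]`: let `h > 0`, `Λ` invertible and
`H = Ċ − ΛC`. If `w` satisfies `A(h)w = ηw` for some scalar `η` and `Hw = 0`, then `w = 0`. -/
theorem iwp_complete_detectability
    (q d : ℕ) (hq : 1 ≤ q) (hd : 1 ≤ d) (h : ℝ) (hh : 0 < h)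
    (Λ : Matrix (Fin d) (Fin d) ℝ) (hΛ : IsUnit Λ)
    (w : Fin (q + 1) × Fin d → ℝ) (η : ℝ)
    (heig : (Amat q d h).mulVec w = η • w)
    (hH : (Cdot q d - Λ * Cmat q d).mulVec w = 0) :
    w = 0 := by
  have heq : ∀ i : Fin (q+1), ∀ m : Fin d,
      ∑ j, Aone q h i j * w (j, m) = η * w (i, m) := by
    intro i m
    have := congrFun heig (i, m)
    simpa [Amat, Matrix.mulVec, dotProduct, Fintype.sum_prod_type,
      Matrix.one_apply, mul_ite, ite_mul, Finset.sum_ite_eq'] using this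
  have hAdiag : ∀ i : Fin (q+1), Aone q h i i = 1 := by
    intro i; simp [Aone]
  by_cases hη : η = 1
  · -- eigenvalue 1 : back substitution kills all blocks except the first
    subst hη
    have key : ∀ k : ℕ, ∀ j : Fin (q+1), q + 1 ≤ j.val + k → 1 ≤ j.val →
        ∀ m, w (j, m) = 0 := by
      intro k
      induction k with
      | zero => intro j hj _ m; exact absurd j.isLt (by omega)
      | succ k ih =>
        intro j hj hj1 m
        have hij : j.val - 1 < q + 1 := by omega
        set i : Fin (q+1) := ⟨j.val - 1, hij⟩ with hi
        have hiv : i.val + 1 = j.val := by simp [hi]; omega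
        have hsum := heq i m
        rw [← Finset.add_sum_erase _ _ (Finset.mem_univ i), hAdiag, one_mul] at hsum
        have hrest : ∑ j' ∈ Finset.univ.erase i, Aone q h i j' * w (j', m)
            = Aone q h i j * w (j, m) := by
          apply Finset.sum_eq_single_of_mem
          · refine Finset.mem_erase.2 ⟨?_, Finset.mem_univ j⟩
            intro hji; rw [hji] at hiv; omega
          · intro j' hj' hne
            have hj'i : j' ≠ i := (Finset.mem_erase.1 hj').1
            by_cases hle : i ≤ j'
            · have h1 : i.val < j'.val := lt_of_le_of_ne (Fin.le_def.1 hle)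
                (fun hc => hj'i (Fin.ext hc.symm))
              have h2 : j.val < j'.val := by
                rcases lt_or_ge j.val j'.val with hlt | hge
                · exact hlt
                · exfalso; apply hne; apply Fin.ext; omega
              rw [ih j' (by omega) (by omega) m, mul_zero]
            · simp [Aone, hle]
        rw [hrest] at hsum
        have hA : Aone q h i j = h := by
          have : i ≤ j := Fin.le_def.2 (by omega)
          simp [Aone, this, show j.val - i.val = 1 by omega]
        rw [hA] at hsum
        have : h * w (j, m) = 0 := by linarith
        exact (mul_eq_zero.1 this).resolve_left (ne_of_gt hh)
    have hupper : ∀ j : Fin (q+1), 1 ≤ j.val → ∀ m, w (j, m) = 0 :=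
      fun j hj m => key (q+1) j (by omega) hj m
    -- now use H w = 0 to kill the first block
    have hΛ0 : Λ.mulVec (fun n => w (⟨0, by omega⟩, n)) = 0 := by
      funext k
      have hk := congrFun hH k
      simp only [Pi.zero_apply] at hk
      have hone : (1 : ℕ) < q + 1 := by omega
      rw [Matrix.mulVec, dotProduct] at hk
      rw [Fintype.sum_prod_type] at hk
      have hk2 : ∑ n, ((Cdot q d - Λ * Cmat q d) k (⟨0, by omega⟩, n)) * w (⟨0, by omega⟩, n)
          = 0 := by
        rw [← hk]
        symm
        rw [← Finset.add_sum_erase _ _ (Finset.mem_univ (⟨0, by omega⟩ : Fin (q+1)))]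
        have : ∑ j ∈ Finset.univ.erase (⟨0, by omega⟩ : Fin (q+1)),
            ∑ n, ((Cdot q d - Λ * Cmat q d) k (j, n)) * w (j, n) = 0 := by
          apply Finset.sum_eq_zero
          intro j hj
          apply Finset.sum_eq_zero
          intro n _
          have hj0 : j ≠ ⟨0, by omega⟩ := (Finset.mem_erase.1 hj).1
          have : 1 ≤ j.val := by
            rcases Nat.eq_zero_or_pos j.val with h0 | h1
            · exact absurd (Fin.ext h0) hj0
            · exact h1
          rw [hupper j this n, mul_zero]
        rw [this, add_zero]
      have hentry : ∀ n, (Cdot q d - Λ * Cmat q d) k (⟨0, by omega⟩, n) = -Λ k n := by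
        intro n
        simp [Cdot, Cmat, Matrix.sub_apply, Matrix.mul_apply]
      rw [Finset.sum_congr rfl (fun n _ => by rw [hentry n])] at hk2
      simp only [Matrix.mulVec, dotProduct, Pi.zero_apply]
      have : -∑ n, Λ k n * w (⟨0, by omega⟩, n) = 0 := by
        rw [← hk2]; simp [Finset.sum_neg_distrib, neg_mul]
      linarith
    have hw0 : (fun n => w (⟨0, by omega⟩, n)) = 0 := by
      have hinj := Matrix.mulVec_injective_iff_isUnit.2 hΛ
      have := hinj (by rw [hΛ0, Matrix.mulVec_zero] : Λ.mulVec _ = Λ.mulVec 0)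
      exact this
    funext p
    obtain ⟨j, m⟩ := p
    rcases Nat.eq_zero_or_pos j.val with h0 | h1
    · have : j = ⟨0, by omega⟩ := Fin.ext h0
      rw [this]
      exact congrFun hw0 m
    · exact hupper j h1 m
  · -- eigenvalue ≠ 1 : back substitution kills everything
    have key : ∀ k : ℕ, ∀ j : Fin (q+1), q + 1 ≤ j.val + k →
        ∀ m, w (j, m) = 0 := by
      intro k
      induction k with
      | zero => intro j hj m; exact absurd j.isLt (by omega)
      | succ k ih =>
        intro j hj m
        have hsum := heq j m
        rw [← Finset.add_sum_erase _ _ (Finset.mem_univ j), hAdiag, one_mul] at hsum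
        have hrest : ∑ j' ∈ Finset.univ.erase j, Aone q h j j' * w (j', m) = 0 := by
          apply Finset.sum_eq_zero
          intro j' hj'
          have hj'j : j' ≠ j := (Finset.mem_erase.1 hj').1
          by_cases hle : j ≤ j'
          · have h1 : j.val < j'.val := lt_of_le_of_ne (Fin.le_def.1 hle)
              (fun hc => hj'j (Fin.ext hc.symm))
            rw [ih j' (by omega) m, mul_zero]
          · simp [Aone, hle]
        rw [hrest, add_zero] at hsum
        have : (η - 1) * w (j, m) = 0 := by linarith
        exact (mul_eq_zero.1 this).resolve_left (sub_ne_zero.2 hη)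
    funext p
    obtain ⟨j, m⟩ := p
    exact key (q+1) j (by omega) m
end

section
/- Complete stabilisability of the pair [A(h), Q^{1/2}(h)]: let h > 0 and let Γ ∈ ℝ^{d×d} be symmetric positive definite. If a vector w ∈ ℝ^{(q+1)d} satisfies wᵀA(h) = ηwᵀ for some scalar η and wᵀQ(h) = 0 (equivalently, wᵀQ^{1/2}(h) = 0), then w = 0. -/
open Matrix
open scoped Kronecker

/-- Entries of the one-dimensional discretised IWP(q) process-noise covariance `Q⁽¹⁾(h)`. -/
noncomputable def Qone (q : ℕ) (h : ℝ) : Matrix (Fin (q + 1)) (Fin (q + 1)) ℝ :=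
  Matrix.of fun i j =>
    h ^ (2 * q + 1 - i.val - j.val) /
      ((2 * q + 1 - i.val - j.val) * Nat.factorial (q - i.val) * Nat.factorial (q - j.val))

/-- The discretised IWP(q) process-noise covariance `Q(h) = Q⁽¹⁾(h) ⊗ Γ`. -/
noncomputable def Qmat (q d : ℕ) (h : ℝ) (Γ : Matrix (Fin d) (Fin d) ℝ) :
    Matrix (Fin (q + 1) × Fin d) (Fin (q + 1) × Fin d) ℝ :=
  Qone q h ⊗ₖ Γ

lemma qone_quadform (q : ℕ) (h : ℝ) (x : Fin (q + 1) → ℝ) :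
    x ⬝ᵥ (Qone q h).mulVec x
      = ∫ t in (0:ℝ)..h,
          (∑ i : Fin (q + 1), x i / (Nat.factorial (q - i.val)) * t ^ (q - i.val)) ^ 2 := by
  have key : ∀ t : ℝ,
      (∑ i : Fin (q + 1), x i / (Nat.factorial (q - i.val)) * t ^ (q - i.val)) ^ 2
        = ∑ i : Fin (q + 1), ∑ j : Fin (q + 1),
            x i * x j / (Nat.factorial (q - i.val) * Nat.factorial (q - j.val))
              * t ^ ((q - i.val) + (q - j.val)) := by
    intro t
    rw [sq, Finset.sum_mul_sum]
    refine Finset.sum_congr rfl fun i _ => Finset.sum_congr rfl fun j _ => ?_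
    rw [pow_add]; ring
  simp only [key]
  rw [intervalIntegral.integral_finset_sum]
  · refine Finset.sum_congr rfl fun i _ => ?_
    rw [intervalIntegral.integral_finset_sum]
    · simp only [dotProduct, Matrix.mulVec, Finset.mul_sum]
      refine Finset.sum_congr rfl fun j _ => ?_
      rw [intervalIntegral.integral_const_mul, integral_pow]
      have hi : i.val ≤ q := Nat.lt_succ_iff.mp i.isLt
      have hj : j.val ≤ q := Nat.lt_succ_iff.mp j.isLt
      have hN : 2 * q + 1 - i.val - j.val = (q - i.val) + (q - j.val) + 1 := by omega
      have hfi : (Nat.factorial (q - i.val) : ℝ) ≠ 0 := Nat.cast_ne_zero.mpr (Nat.factorial_ne_zero _)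
      have hfj : (Nat.factorial (q - j.val) : ℝ) ≠ 0 := Nat.cast_ne_zero.mpr (Nat.factorial_ne_zero _)
      simp only [Qone, Matrix.of_apply, hN]
      rw [zero_pow (Nat.succ_ne_zero _)]
      set a := q - i.val with ha
      set b := q - j.val with hb
      have haR : (a : ℝ) = (q : ℝ) - i.val := by rw [ha, Nat.cast_sub hi]
      have hbR : (b : ℝ) = (q : ℝ) - j.val := by rw [hb, Nat.cast_sub hj]
      have hden : (2 * (q : ℝ) + 1 - i.val - j.val) = (a : ℝ) + b + 1 := by
        rw [haR, hbR]; ring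
      have hcast2 : ((a + b : ℕ) : ℝ) + 1 = (a : ℝ) + b + 1 := by push_cast; ring
      rw [hden, hcast2]
      have hn' : ((a : ℝ) + b + 1) ≠ 0 := by positivity
      field_simp
      ring
    · intro j _
      exact ((continuous_const.mul (continuous_pow _)).intervalIntegrable _ _)
  · intro i _
    exact ((continuous_finset_sum _ fun j _ =>
      continuous_const.mul (continuous_pow _)).intervalIntegrable _ _)

lemma qone_posDef (q : ℕ) (h : ℝ) (hh : 0 < h) : (Qone q h).PosDef := by
  rw [Matrix.posDef_iff_dotProduct_mulVec]
  constructor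
  · ext i j
    simp only [Qone, Matrix.conjTranspose_apply, Matrix.of_apply, star_trivial]
    have : 2 * q + 1 - j.val - i.val = 2 * q + 1 - i.val - j.val := by omega
    rw [this]; ring
  · intro x hx
    simp only [star_trivial]
    rw [qone_quadform]
    -- the polynomial
    set P : Polynomial ℝ :=
      ∑ i : Fin (q + 1), Polynomial.C (x i / (Nat.factorial (q - i.val))) * Polynomial.X ^ (q - i.val)
      with hP
    have heval : ∀ t : ℝ,
        (∑ i : Fin (q + 1), x i / (Nat.factorial (q - i.val)) * t ^ (q - i.val)) = P.eval t := by
      intro t; simp [hP, Polynomial.eval_finset_sum]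
    have hPne : P ≠ 0 := by
      obtain ⟨i0, hi0⟩ := Function.ne_iff.mp hx
      have hi0' : x i0 ≠ 0 := by simpa using hi0
      intro h0
      have hcoeff : P.coeff (q - i0.val) = x i0 / (Nat.factorial (q - i0.val)) := by
        rw [hP, Polynomial.finset_sum_coeff]
        rw [Finset.sum_eq_single i0]
        · simp
        · intro j _ hji
          have hij : q - j.val ≠ q - i0.val := by
            have hi : i0.val ≤ q := Nat.lt_succ_iff.mp i0.isLt
            have hjq : j.val ≤ q := Nat.lt_succ_iff.mp j.isLt
            intro hEq
            exact hji (Fin.ext (by omega))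
          simp only [Polynomial.coeff_C_mul, Polynomial.coeff_X_pow]
          rw [if_neg (Ne.symm hij), mul_zero]
        · simp
      rw [h0] at hcoeff
      simp only [Polynomial.coeff_zero] at hcoeff
      have hfi : (Nat.factorial (q - i0.val) : ℝ) ≠ 0 :=
        Nat.cast_ne_zero.mpr (Nat.factorial_ne_zero _)
      field_simp at hcoeff
      exact hi0' (by simpa using hcoeff.symm)
    -- a point where P isn't zero
    have hinf : (Set.Ioo (0:ℝ) h).Infinite := Set.Ioo_infinite hh
    obtain ⟨t0, ht0mem, ht0⟩ :
        ∃ t0 ∈ Set.Ioo (0:ℝ) h, ¬ P.IsRoot t0 := by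
      by_contra hc
      push_neg at hc
      exact (Polynomial.finite_setOf_isRoot hPne).not_infinite
        (hinf.mono fun t ht => hc t ht)
    refine intervalIntegral.integral_pos hh ?_ ?_ ?_
    · exact Continuous.continuousOn
        (((continuous_finset_sum _ fun i _ =>
          (continuous_const.mul (continuous_pow _))).pow 2))
    · intro t _; positivity
    · refine ⟨t0, ⟨le_of_lt ht0mem.1, le_of_lt ht0mem.2⟩, ?_⟩
      rw [heval]
      have : P.eval t0 ≠ 0 := ht0
      positivity

/-- complete stabilisability of `[A(h), Q^{1/2}(h)]`: let `h > 0` and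
`Γ` symmetric positive definite. If `w` satisfies `wᵀA(h) = ηwᵀ` for some scalar `η` and
`wᵀQ(h) = 0` (equivalently `wᵀQ^{1/2}(h) = 0`), then `w = 0`. -/
theorem iwp_complete_stabilisability
    (q d : ℕ) (hq : 1 ≤ q) (hd : 1 ≤ d) (h : ℝ) (hh : 0 < h)
    (Γ : Matrix (Fin d) (Fin d) ℝ) (hΓsymm : Γ.IsSymm) (hΓ : Γ.PosDef)
    (w : Fin (q + 1) × Fin d → ℝ) (η : ℝ)
    (heig : Matrix.vecMul w (Amat q d h) = η • w)
    (hQ : Matrix.vecMul w (Qmat q d h Γ) = 0) :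
    w = 0 := by
  have hdet : IsUnit (Qmat q d h Γ).det := by
    rw [Qmat, Matrix.det_kronecker]
    exact (mul_ne_zero (pow_ne_zero _ (qone_posDef q h hh).det_pos.ne')
      (pow_ne_zero _ hΓ.det_pos.ne')).isUnit
  calc w = Matrix.vecMul w 1 := (Matrix.vecMul_one w).symm
    _ = Matrix.vecMul w (Qmat q d h Γ * (Qmat q d h Γ)⁻¹) := by
        rw [Matrix.mul_nonsing_inv _ hdet]
    _ = Matrix.vecMul (Matrix.vecMul w (Qmat q d h Γ)) (Qmat q d h Γ)⁻¹ :=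
        (Matrix.vecMul_vecMul _ _ _).symm
    _ = 0 := by rw [hQ, Matrix.zero_vecMul]
end

section
/- Quadrature filters reduce to the exact Kalman filter for affine vector fields (Lemma 1, quadrature part): let f(y,t) = Λ(t)y + ζ(t) be affine and H = Ċ − Λ(t)C. Let {x_j}_{j=1}^J ⊂ ℝ^{(q+1)d} and weights {w_j}_{j=1}^J ⊂ ℝ form a quadrature rule that integrates polynomials correctly up to second order with respect to a distribution with mean μ^P and covariance Σ^P, i.e. Σ_j w_j = 1, Σ_j w_j x_j = μ^P, and Σ_j w_j (x_j − μ^P)(x_j − μ^P)ᵀ = Σ^P. Then, for the measurement function Z(x) = Ċx − f(Cx,t) = Hx − ζ(t), the quadrature approximations of the update moments are exact: Σ_j w_j Z(x_j) = Hμ^P − ζ(t), Σ_j w_j (Z(x_j) − Hμ^P + ζ(t))(Z(x_j) − Hμ^P + ζ(t))ᵀ = HΣ^PHᵀ, and Σ_j w_j (x_j − μ^P)(Z(x_j) − Hμ^P + ζ(t))ᵀ = Σ^PHᵀ; consequently the quadrature-based Gaussian filter update coincides with the exact Kalman update. -/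
open Matrix
open scoped BigOperators

/-- `H = Ċ − ΛC`. -/
def Hmat (q d : ℕ) (Λ : Matrix (Fin d) (Fin d) ℝ) :
    Matrix (Fin d) (Fin (q + 1) × Fin d) ℝ :=
  Cdot q d - Λ * Cmat q d

/-- The affine measurement function `Z(x) = Ċx − f(Cx,t) = Ċx − (Λ(Cx) + ζ) = Hx − ζ`. -/
noncomputable def Zfun (q d : ℕ) (Λ : Matrix (Fin d) (Fin d) ℝ) (ζ : Fin d → ℝ)
    (x : Fin (q + 1) × Fin d → ℝ) : Fin d → ℝ :=
  (Cdot q d).mulVec x - (Λ.mulVec ((Cmat q d).mulVec x) + ζ)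


lemma Zfun_eq (q d : ℕ) (Λ : Matrix (Fin d) (Fin d) ℝ) (ζ : Fin d → ℝ)
    (x : Fin (q + 1) × Fin d → ℝ) :
    Zfun q d Λ ζ x = (Hmat q d Λ).mulVec x - ζ := by
  unfold Zfun Hmat
  rw [Matrix.sub_mulVec, Matrix.mulVec_mulVec]
  abel

lemma mulVec_vecMulVec {d n : ℕ} {m : Type*} [Fintype m]
    (H : Matrix (Fin d) m ℝ) (K : Matrix (Fin n) m ℝ) (a b : m → ℝ) :
    Matrix.vecMulVec (H.mulVec a) (K.mulVec b) = H * Matrix.vecMulVec a b * Kᵀ := by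
  rw [Matrix.vecMulVec_eq Unit, Matrix.vecMulVec_eq Unit, Matrix.replicateCol_mulVec,
    Matrix.replicateRow_mulVec, Matrix.transpose_mul, Matrix.transpose_replicateCol, Matrix.mul_assoc,
    Matrix.mul_assoc, Matrix.mul_assoc]

lemma sum_mulVec {J : ℕ} {m n : Type*} [Fintype m] [Fintype n]
    (H : Matrix n m ℝ) (v : Fin J → (m → ℝ)) :
    ∑ j, H.mulVec (v j) = H.mulVec (∑ j, v j) := by
  ext i
  simp only [Finset.sum_apply, Matrix.mulVec, dotProduct, Finset.mul_sum]
  rw [Finset.sum_comm]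

lemma vecMulVec_mulVec_right {n : ℕ} {m : Type*} [Fintype m]
    (K : Matrix (Fin n) m ℝ) (a : m → ℝ) (b : m → ℝ) :
    Matrix.vecMulVec a (K.mulVec b) = Matrix.vecMulVec a b * Kᵀ := by
  rw [Matrix.vecMulVec_eq Unit, Matrix.vecMulVec_eq Unit, Matrix.replicateRow_mulVec,
    Matrix.transpose_mul, Matrix.transpose_replicateCol, Matrix.mul_assoc]

/-- Lemma 1 of the paper, quadrature part: let `f(y,t) = Λ(t)y + ζ(t)` be
affine and `H = Ċ − Λ(t)C`.  If the quadrature rule `{(x_j, w_j)}_{j=1}^J` integrates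
polynomials correctly up to second order with respect to a distribution with mean `μᴾ` and
covariance `Σᴾ` (weights sum to one, weighted nodes reproduce the mean, weighted centred
outer products reproduce the covariance), then the quadrature approximations of the
Gaussian-filter update moments for the measurement function `Z(x) = Ċx − f(Cx,t) = Hx − ζ`
are exact: the weighted mean of `Z` is `Hμᴾ − ζ`, the weighted centred outer products of
`Z` give `HΣᴾHᵀ`, and the weighted centred cross outer products give `ΣᴾHᵀ`; consequently
the quadrature-based Gaussian filter update coincides with the exact Kalman update. -/
theorem quadrature_update_exact_affine
    (q d J : ℕ) (hq : 1 ≤ q) (hd : 1 ≤ d)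
    (Λ : Matrix (Fin d) (Fin d) ℝ) (ζ : Fin d → ℝ)
    (μP : Fin (q + 1) × Fin d → ℝ)
    (SigmaP : Matrix (Fin (q + 1) × Fin d) (Fin (q + 1) × Fin d) ℝ)
    (x : Fin J → (Fin (q + 1) × Fin d → ℝ)) (w : Fin J → ℝ)
    (hw1 : ∑ j, w j = 1)
    (hmean : ∑ j, w j • x j = μP)
    (hcov : ∑ j, w j • Matrix.vecMulVec (x j - μP) (x j - μP) = SigmaP) :
    (∑ j, w j • Zfun q d Λ ζ (x j) = (Hmat q d Λ).mulVec μP - ζ) ∧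
      (∑ j, w j • Matrix.vecMulVec
          (Zfun q d Λ ζ (x j) - ((Hmat q d Λ).mulVec μP - ζ))
          (Zfun q d Λ ζ (x j) - ((Hmat q d Λ).mulVec μP - ζ)) =
        Hmat q d Λ * SigmaP * (Hmat q d Λ)ᵀ) ∧
      (∑ j, w j • Matrix.vecMulVec
          (x j - μP)
          (Zfun q d Λ ζ (x j) - ((Hmat q d Λ).mulVec μP - ζ)) =
        SigmaP * (Hmat q d Λ)ᵀ) := by
  have hdiff : ∀ j, Zfun q d Λ ζ (x j) - ((Hmat q d Λ).mulVec μP - ζ)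
      = (Hmat q d Λ).mulVec (x j - μP) := by
    intro j
    rw [Zfun_eq, Matrix.mulVec_sub]
    abel
  refine ⟨?_, ?_, ?_⟩
  · calc ∑ j, w j • Zfun q d Λ ζ (x j)
        = ∑ j, ((Hmat q d Λ).mulVec (w j • x j) - w j • ζ) := by
          refine Finset.sum_congr rfl fun j _ => ?_
          rw [Zfun_eq, smul_sub, Matrix.mulVec_smul]
      _ = (Hmat q d Λ).mulVec (∑ j, w j • x j) - (∑ j, w j) • ζ := by
          rw [Finset.sum_sub_distrib, ← Finset.sum_smul]
          congr 1
          exact sum_mulVec _ _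
      _ = (Hmat q d Λ).mulVec μP - ζ := by rw [hmean, hw1, one_smul]
  · calc ∑ j, w j • Matrix.vecMulVec
          (Zfun q d Λ ζ (x j) - ((Hmat q d Λ).mulVec μP - ζ))
          (Zfun q d Λ ζ (x j) - ((Hmat q d Λ).mulVec μP - ζ))
        = ∑ j, Hmat q d Λ * (w j • Matrix.vecMulVec (x j - μP) (x j - μP))
            * (Hmat q d Λ)ᵀ := by
          refine Finset.sum_congr rfl fun j _ => ?_
          rw [hdiff, mulVec_vecMulVec, Matrix.mul_smul, Matrix.smul_mul]
      _ = Hmat q d Λ * SigmaP * (Hmat q d Λ)ᵀ := by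
          rw [← hcov, Matrix.mul_sum, Matrix.sum_mul]
  · calc ∑ j, w j • Matrix.vecMulVec (x j - μP)
          (Zfun q d Λ ζ (x j) - ((Hmat q d Λ).mulVec μP - ζ))
        = ∑ j, (w j • Matrix.vecMulVec (x j - μP) (x j - μP)) * (Hmat q d Λ)ᵀ := by
          refine Finset.sum_congr rfl fun j _ => ?_
          rw [hdiff, vecMulVec_mulVec_right, Matrix.smul_mul]
      _ = SigmaP * (Hmat q d Λ)ᵀ := by rw [← hcov, Matrix.sum_mul]
end

section
/- Scaling property of the Kalman filter for affine vector fields (Proposition 4, first part): let f(y,t) = Λ(t)y + ζ(t), σ > 0, R = 0, and let H_n = Ċ − Λ(t_n)C. Consider two Kalman filter recursions started from the same initial mean μ₀^F: one with parameters (μ₀^F, Σ₀ = σ²Σ̆₀, A(h), ξ(h), Q(h) = σ²Q̆(h)), producing (μ_n^P, Σ_n^P, S_n, K_n, ẑ_n, μ_n^F, Σ_n^F), and one with parameters (μ₀^F, Σ̆₀, A(h), ξ(h), Q̆(h)), producing (μ̆_n^P, Σ̆_n^P, S̆_n, K̆_n, z̆_n, μ̆_n^F, Σ̆_n^F), where in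 both recursions μ_{n+1}^P = A(h)μ_n^F + ξ(h), Σ_{n+1}^P = A(h)Σ_n^F A(h)ᵀ + (process-noise covariance), S_{n+1} = H_{n+1}Σ_{n+1}^P H_{n+1}ᵀ, K_{n+1} = Σ_{n+1}^P H_{n+1}ᵀ S_{n+1}^{−1}, ẑ_{n+1} = H_{n+1}μ_{n+1}^P − ζ(t_{n+1}), μ_{n+1}^F = μ_{n+1}^P + K_{n+1}(ζ(t_{n+1}) − H_{n+1}μ_{n+1}^P), Σ_{n+1}^F = Σ_{n+1}^P − K_{n+1}S_{n+1}K_{n+1}ᵀ, and each S̆_n is invertible. Then for all n ≥ 0: μ_n^P = μ̆_n^P, μ_n^F = μ̆_n^F, Σ_n^P = σ²Σ̆_n^P, Σ_n^F = σ²Σ̆_n^F, K_n = K̆_n, ẑ_n = z̆_n, and S_n = σ²S̆_n. -/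
open Matrix

lemma smul_inv_aux {m : Type*} [Fintype m] [DecidableEq m] (c : ℝ) (hc : c ≠ 0)
    (M : Matrix m m ℝ) (hM : IsUnit M) : (c • M)⁻¹ = c⁻¹ • M⁻¹ :=
  Matrix.inv_eq_left_inv (by
    rw [Matrix.smul_mul, Matrix.mul_smul, smul_smul, inv_mul_cancel₀ hc, one_smul,
      Matrix.nonsing_inv_mul _ ((Matrix.isUnit_iff_isUnit_det M).mp hM)])

/-- Proposition 4 of the paper, first part: for the affine vector field
`f(y,t) = Λ(t)y + ζ(t)`, measurements `zₙ = 0`, `R = 0`, `Hₙ = Ċ − Λ(tₙ)C`, and `σ > 0`,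
the Kalman filter run with parameters `(μ₀ᶠ, σ²Σ̆₀, A(h), ξ(h), σ²Q̆(h))` and the Kalman
filter run with parameters `(μ₀ᶠ, Σ̆₀, A(h), ξ(h), Q̆(h))` are related, for all `n`, by
`μₙᴾ = μ̆ₙᴾ`, `μₙᶠ = μ̆ₙᶠ`, `Σₙᴾ = σ²Σ̆ₙᴾ`, `Σₙᶠ = σ²Σ̆ₙᶠ`, `Kₙ = K̆ₙ`, `ẑₙ = z̆ₙ` and
`Sₙ = σ²S̆ₙ` (the predictive quantities being defined for `n ≥ 1`). -/
theorem kalman_filter_scaling_affine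
    (q d : ℕ) (hq : 1 ≤ q) (hd : 1 ≤ d) (σ : ℝ) (hσ : 0 < σ)
    -- model parameters
    (A : Matrix (Fin (q + 1) × Fin d) (Fin (q + 1) × Fin d) ℝ)
    (ξ : Fin (q + 1) × Fin d → ℝ)
    (Qb Sigma0b : Matrix (Fin (q + 1) × Fin d) (Fin (q + 1) × Fin d) ℝ)
    (hQb : Qb.PosSemidef) (hSigma0b : Sigma0b.PosSemidef)
    (Λ : ℕ → Matrix (Fin d) (Fin d) ℝ) (ζ : ℕ → (Fin d → ℝ))
    -- the scaled filter
    (μP μF : ℕ → (Fin (q + 1) × Fin d → ℝ))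
    (SigmaP SigmaF : ℕ → Matrix (Fin (q + 1) × Fin d) (Fin (q + 1) × Fin d) ℝ)
    (S : ℕ → Matrix (Fin d) (Fin d) ℝ)
    (K : ℕ → Matrix (Fin (q + 1) × Fin d) (Fin d) ℝ)
    (zhat : ℕ → (Fin d → ℝ))
    -- the unscaled filter
    (μPb μFb : ℕ → (Fin (q + 1) × Fin d → ℝ))
    (SigmaPb SigmaFb : ℕ → Matrix (Fin (q + 1) × Fin d) (Fin (q + 1) × Fin d) ℝ)
    (Sb : ℕ → Matrix (Fin d) (Fin d) ℝ)
    (Kb : ℕ → Matrix (Fin (q + 1) × Fin d) (Fin d) ℝ)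
    (zb : ℕ → (Fin d → ℝ))
    -- common initial mean, scaled/unscaled initial covariances
    (hμ0 : μF 0 = μFb 0)
    (hSigmaF0 : SigmaF 0 = σ ^ 2 • Sigma0b) (hSigmaFb0 : SigmaFb 0 = Sigma0b)
    -- recursion of the scaled filter (process noise `σ²Q̆(h)`)
    (hμP : ∀ n, μP (n + 1) = A.mulVec (μF n) + ξ)
    (hSigmaP : ∀ n, SigmaP (n + 1) = A * SigmaF n * Aᵀ + σ ^ 2 • Qb)
    (hS : ∀ n, S (n + 1) =
      (Cdot q d - Λ (n + 1) * Cmat q d) * SigmaP (n + 1) *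
        (Cdot q d - Λ (n + 1) * Cmat q d)ᵀ)
    (hK : ∀ n, K (n + 1) =
      SigmaP (n + 1) * (Cdot q d - Λ (n + 1) * Cmat q d)ᵀ * (S (n + 1))⁻¹)
    (hzhat : ∀ n, zhat (n + 1) =
      (Cdot q d - Λ (n + 1) * Cmat q d).mulVec (μP (n + 1)) - ζ (n + 1))
    (hμF : ∀ n, μF (n + 1) = μP (n + 1) +
      (K (n + 1)).mulVec (ζ (n + 1) -
        (Cdot q d - Λ (n + 1) * Cmat q d).mulVec (μP (n + 1))))
    (hSigmaF : ∀ n, SigmaF (n + 1) = SigmaP (n + 1) - K (n + 1) * S (n + 1) * (K (n + 1))ᵀ)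
    -- recursion of the unscaled filter (process noise `Q̆(h)`)
    (hμPb : ∀ n, μPb (n + 1) = A.mulVec (μFb n) + ξ)
    (hSigmaPb : ∀ n, SigmaPb (n + 1) = A * SigmaFb n * Aᵀ + Qb)
    (hSb : ∀ n, Sb (n + 1) =
      (Cdot q d - Λ (n + 1) * Cmat q d) * SigmaPb (n + 1) *
        (Cdot q d - Λ (n + 1) * Cmat q d)ᵀ)
    (hKb : ∀ n, Kb (n + 1) =
      SigmaPb (n + 1) * (Cdot q d - Λ (n + 1) * Cmat q d)ᵀ * (Sb (n + 1))⁻¹)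
    (hzb : ∀ n, zb (n + 1) =
      (Cdot q d - Λ (n + 1) * Cmat q d).mulVec (μPb (n + 1)) - ζ (n + 1))
    (hμFb : ∀ n, μFb (n + 1) = μPb (n + 1) +
      (Kb (n + 1)).mulVec (ζ (n + 1) -
        (Cdot q d - Λ (n + 1) * Cmat q d).mulVec (μPb (n + 1))))
    (hSigmaFb : ∀ n, SigmaFb (n + 1) =
      SigmaPb (n + 1) - Kb (n + 1) * Sb (n + 1) * (Kb (n + 1))ᵀ)
    -- each unscaled innovation covariance is invertible
    (hSbinv : ∀ n, IsUnit (Sb (n + 1))) :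
    (∀ n, μF n = μFb n) ∧ (∀ n, SigmaF n = σ ^ 2 • SigmaFb n) ∧
      (∀ n, μP (n + 1) = μPb (n + 1)) ∧
      (∀ n, SigmaP (n + 1) = σ ^ 2 • SigmaPb (n + 1)) ∧
      (∀ n, S (n + 1) = σ ^ 2 • Sb (n + 1)) ∧
      (∀ n, K (n + 1) = Kb (n + 1)) ∧
      (∀ n, zhat (n + 1) = zb (n + 1)) := by
  have hσ2 : (σ ^ 2 : ℝ) ≠ 0 := by positivity
  -- main induction on the filtered quantities
  have key : ∀ n, μF n = μFb n ∧ SigmaF n = σ ^ 2 • SigmaFb n := by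
    intro n
    induction n with
    | zero => exact ⟨hμ0, by rw [hSigmaF0, hSigmaFb0]⟩
    | succ n ih =>
      have hμPs : μP (n + 1) = μPb (n + 1) := by rw [hμP, hμPb, ih.1]
      have hSPs : SigmaP (n + 1) = σ ^ 2 • SigmaPb (n + 1) := by
        rw [hSigmaP, hSigmaPb, ih.2]
        simp [Matrix.smul_mul, Matrix.mul_smul, smul_add]
      have hSs : S (n + 1) = σ ^ 2 • Sb (n + 1) := by
        rw [hS, hSb, hSPs]
        simp [Matrix.smul_mul, Matrix.mul_smul]
      have hinv : ((σ ^ 2 : ℝ) • Sb (n + 1))⁻¹ = (σ ^ 2 : ℝ)⁻¹ • (Sb (n + 1))⁻¹ :=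
        smul_inv_aux _ hσ2 _ (hSbinv n)
      have hKs : K (n + 1) = Kb (n + 1) := by
        rw [hK, hKb, hSPs, hSs, hinv, Matrix.mul_smul, Matrix.smul_mul, Matrix.smul_mul,
          smul_smul, inv_mul_cancel₀ hσ2, one_smul]
      constructor
      · rw [hμF, hμFb, hμPs, hKs]
      · rw [hSigmaF, hSigmaFb, hSPs, hSs, hKs]
        simp [Matrix.smul_mul, Matrix.mul_smul, smul_sub]
  have hμPs : ∀ n, μP (n + 1) = μPb (n + 1) := fun n => by
    rw [hμP, hμPb, (key n).1]
  have hSPs : ∀ n, SigmaP (n + 1) = σ ^ 2 • SigmaPb (n + 1) := fun n => by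
    rw [hSigmaP, hSigmaPb, (key n).2]
    simp [Matrix.smul_mul, Matrix.mul_smul, smul_add]
  have hSs : ∀ n, S (n + 1) = σ ^ 2 • Sb (n + 1) := fun n => by
    rw [hS, hSb, hSPs]
    simp [Matrix.smul_mul, Matrix.mul_smul]
  have hKs : ∀ n, K (n + 1) = Kb (n + 1) := fun n => by
    rw [hK, hKb, hSPs, hSs, smul_inv_aux _ hσ2 _ (hSbinv n), Matrix.mul_smul,
      Matrix.smul_mul, Matrix.smul_mul, smul_smul, inv_mul_cancel₀ hσ2, one_smul]
  refine ⟨fun n => (key n).1, fun n => (key n).2, hμPs, hSPs, hSs, hKs, fun n => ?_⟩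
  rw [hzhat, hzb, hμPs]
end
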